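/- Let S₋ and S₊ be real symmetric n×n matrices such that D := S₊ − S₋ is positive semidefinite, and let X, Y ∈ ℝⁿ satisfy, for every k ∈ ℝⁿ, ⟨Y, k⟩ ≤ (1/2)(⟨S₊k, k⟩ + ⟨S₊X, X⟩ − ⟨S₋(X−k), X−k⟩). Then ‖Y − (2S₋ − S₊)X‖ ≤ 2·√‖D‖·√⟨DX, X⟩, and moreover ‖Y − (2S₋ − S₊)X‖ ≤ 2‖D‖·‖P X‖, where P is the orthogonal projection of ℝⁿ onto the range of D. (This is the linear-algebra content of the paper's Theorem comparing contingent cones of weak KAM pseudographs of u₋ with the Green bundles, with S₋, S₊ the matrices of G₋, G₊.) -/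

import Mathlib

open Matrix RealInnerProductSpace

set_option maxHeartbeats 1000000 in
/-- linear-algebra content of the comparison between contingent cones of
weak KAM pseudographs of `u₋` and the Green bundles. -/
theorem stmt_0 {n : ℕ} (Sm Sp : Matrix (Fin n) (Fin n) ℝ)
    (hSm : Sm.IsSymm) (hSp : Sp.IsSymm)
    (hD : ∀ v : EuclideanSpace ℝ (Fin n), 0 ≤ ⟪Matrix.toEuclideanLin (Sp - Sm) v, v⟫)
    (X Y : EuclideanSpace ℝ (Fin n))
    (h : ∀ k : EuclideanSpace ℝ (Fin n),
      ⟪Y, k⟫ ≤ (1 / 2) * (⟪Matrix.toEuclideanLin Sp k, k⟫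
        + ⟪Matrix.toEuclideanLin Sp X, X⟫
        - ⟪Matrix.toEuclideanLin Sm (X - k), X - k⟫)) :
    ‖Y - Matrix.toEuclideanLin ((2 : ℝ) • Sm - Sp) X‖
      ≤ 2 * Real.sqrt ‖Matrix.toEuclideanCLM (𝕜 := ℝ) (Sp - Sm)‖
          * Real.sqrt ⟪Matrix.toEuclideanLin (Sp - Sm) X, X⟫ ∧
    ‖Y - Matrix.toEuclideanLin ((2 : ℝ) • Sm - Sp) X‖
      ≤ 2 * ‖Matrix.toEuclideanCLM (𝕜 := ℝ) (Sp - Sm)‖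
          * ‖(Submodule.orthogonalProjectionOnto (LinearMap.range (Matrix.toEuclideanLin (Sp - Sm))) X :
              EuclideanSpace ℝ (Fin n))‖ := by
  -- abbreviations
  set LD := Matrix.toEuclideanLin (Sp - Sm) with hLD
  set Lp := Matrix.toEuclideanLin Sp with hLp
  set Lm := Matrix.toEuclideanLin Sm with hLm
  set N := ‖Matrix.toEuclideanCLM (𝕜 := ℝ) (Sp - Sm)‖ with hN
  have hN0 : 0 ≤ N := norm_nonneg _
  -- symmetry of the operators
  have symm_p : Lp.IsSymmetric := by
    rw [hLp, ← Matrix.isHermitian_iff_isSymmetric]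
    rwa [Matrix.IsHermitian, Matrix.conjTranspose_eq_transpose_of_trivial]
  have symm_m : Lm.IsSymmetric := by
    rw [hLm, ← Matrix.isHermitian_iff_isSymmetric]
    rwa [Matrix.IsHermitian, Matrix.conjTranspose_eq_transpose_of_trivial]
  have symm_D : LD.IsSymmetric := by
    rw [hLD, ← Matrix.isHermitian_iff_isSymmetric]
    rw [Matrix.IsHermitian, Matrix.conjTranspose_eq_transpose_of_trivial]
    exact hSp.sub hSm
  have hLDsub : ∀ v : EuclideanSpace ℝ (Fin n), LD v = Lp v - Lm v := by
    intro v; rw [hLD, map_sub]; rfl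
  set Z : EuclideanSpace ℝ (Fin n) := Y - Matrix.toEuclideanLin ((2 : ℝ) • Sm - Sp) X with hZ
  have hZval : Z = Y - ((2:ℝ) • Lm X - Lp X) := by
    rw [hZ, hLm, hLp, map_sub, _root_.map_smul, LinearMap.sub_apply, LinearMap.smul_apply]
  set q : ℝ := ⟪LD X, X⟫ with hq
  have hq0 : 0 ≤ q := hD X
  -- norm bound for LD
  have hLDnorm : ∀ v : EuclideanSpace ℝ (Fin n), ‖LD v‖ ≤ N * ‖v‖ := by
    intro v
    have := (Matrix.toEuclideanCLM (𝕜 := ℝ) (Sp - Sm)).le_opNorm v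
    have hcoe : (Matrix.toEuclideanCLM (𝕜 := ℝ) (Sp - Sm)) v = LD v := by
      rw [hLD, ← Matrix.coe_toEuclideanCLM_eq_toEuclideanLin]; rfl
    rwa [hcoe] at this
  -- master inequality : ∀ u, ⟪Z, u⟫ ≤ 2*q + (1/2) * ⟪LD u, u⟫
  have key : ∀ u : EuclideanSpace ℝ (Fin n), ⟪Z, u⟫ ≤ 2 * q + (1/2) * ⟪LD u, u⟫ := by
    intro u
    have h1 := h (u - X)
    have h2 := h X
    rw [show X - (u - X) = (2:ℝ) • X - u by module] at h1
    rw [show X - X = (0 : EuclideanSpace ℝ (Fin n)) by abel] at h2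
    rw [hZval, hq]
    simp only [hLDsub, map_sub, _root_.map_smul, map_zero, inner_sub_left, inner_sub_right,
      inner_smul_left, inner_smul_right, inner_zero_left, inner_zero_right,
      conj_trivial] at h1 h2 ⊢
    have e1 : ⟪Lp u, X⟫ = ⟪Lp X, u⟫ := by rw [symm_p u X, real_inner_comm]
    have e2 : ⟪Lm u, X⟫ = ⟪Lm X, u⟫ := by rw [symm_m u X, real_inner_comm]
    linarith [h1, h2, e1, e2]
  -- quadratic argument : ‖Z‖^2 * ‖Z‖^2 ≤ 4 * ⟪LD Z, Z⟫ * (2*q) ... use discriminant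
  set s : ℝ := ⟪Z, Z⟫ with hs
  have hs0 : 0 ≤ s := real_inner_self_nonneg
  set dz : ℝ := ⟪LD Z, Z⟫ with hdz
  have quad : ∀ t : ℝ, 0 ≤ (dz/2) * (t*t) + (-s) * t + 2*q := by
    intro t
    have := key (t • Z)
    simp only [inner_smul_right, _root_.map_smul, inner_smul_left, conj_trivial] at this
    rw [← hs, ← hdz] at this
    nlinarith [this]
  have hdisc := discrim_le_zero quad
  rw [discrim] at hdisc
  have hss : s * s ≤ 4 * (dz/2) * (2*q) := by nlinarith [hdisc]
  have hdzs : dz ≤ N * s := by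
    have h1 : dz ≤ ‖LD Z‖ * ‖Z‖ := by rw [hdz]; exact real_inner_le_norm _ _
    have h2 : ‖LD Z‖ * ‖Z‖ ≤ N * ‖Z‖ * ‖Z‖ :=
      mul_le_mul_of_nonneg_right (hLDnorm Z) (norm_nonneg _)
    have h3 : ‖Z‖ * ‖Z‖ = s := (real_inner_self_eq_norm_mul_norm Z).symm
    nlinarith
  have hsle : s ≤ 4 * q * N := by
    rcases eq_or_lt_of_le hs0 with h0 | h0
    · nlinarith
    · nlinarith [hss, hdzs, mul_le_mul_of_nonneg_left hdzs (le_of_lt h0)]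
  -- first bound
  have hZnorm : ‖Z‖ = Real.sqrt s := by
    rw [hs, real_inner_self_eq_norm_mul_norm, Real.sqrt_mul_self (norm_nonneg _)]
  have bound1 : ‖Z‖ ≤ 2 * Real.sqrt N * Real.sqrt q := by
    rw [hZnorm]
    calc Real.sqrt s ≤ Real.sqrt (4 * q * N) := Real.sqrt_le_sqrt hsle
      _ = 2 * Real.sqrt N * Real.sqrt q := by
          rw [Real.sqrt_mul (by positivity : (0:ℝ) ≤ 4 * q) N,
            Real.sqrt_mul (by norm_num : (0:ℝ) ≤ 4) q,
            show Real.sqrt 4 = 2 by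
              rw [show (4:ℝ) = 2^2 by norm_num, Real.sqrt_sq (by norm_num : (0:ℝ) ≤ 2)]]
          ring
  refine ⟨bound1, ?_⟩
  -- second bound
  set K := LinearMap.range LD with hK
  set PX : EuclideanSpace ℝ (Fin n) := (Submodule.orthogonalProjectionOnto K X : EuclideanSpace ℝ (Fin n))
    with hPX
  have hVmem : X - PX ∈ Kᗮ := Submodule.sub_starProjection_mem_orthogonal (K := K) X
  set V : EuclideanSpace ℝ (Fin n) := X - PX with hV
  have hLDV : LD V = 0 := by
    have : ∀ u : EuclideanSpace ℝ (Fin n), ⟪u, LD V⟫ = 0 := by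
      intro u
      rw [← symm_D u V]
      exact hVmem (LD u) (LinearMap.mem_range_self _ _)
    have := this (LD V)
    exact inner_self_eq_zero.mp this
  have hqP : q = ⟪LD PX, PX⟫ := by
    have hXPV : X = PX + V := by rw [hV]; abel
    have h1 : ⟪LD PX, V⟫ = 0 := hVmem (LD PX) (LinearMap.mem_range_self _ _)
    rw [hq, hXPV]
    simp only [map_add, inner_add_left, inner_add_right, hLDV, inner_zero_left, h1]
    ring
  have hqle : q ≤ N * (‖PX‖ * ‖PX‖) := by
    rw [hqP]
    calc ⟪LD PX, PX⟫ ≤ ‖LD PX‖ * ‖PX‖ := real_inner_le_norm _ _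
      _ ≤ N * ‖PX‖ * ‖PX‖ := mul_le_mul_of_nonneg_right (hLDnorm PX) (norm_nonneg _)
      _ = N * (‖PX‖ * ‖PX‖) := by ring
  calc ‖Z‖ ≤ 2 * Real.sqrt N * Real.sqrt q := bound1
    _ ≤ 2 * Real.sqrt N * Real.sqrt (N * (‖PX‖ * ‖PX‖)) := by
        have h1 := Real.sqrt_le_sqrt hqle
        have h2 := Real.sqrt_nonneg N
        nlinarith [h1, h2]
    _ = 2 * N * ‖PX‖ := by
        rw [Real.sqrt_mul hN0, Real.sqrt_mul_self (norm_nonneg _)]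
        linear_combination (2 * ‖PX‖) * Real.mul_self_sqrt hN0
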